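/- Let ℓ ≠ q be positive integers and 0 < κ < 1/2 with 2ℓκ ∉ ℕ or 2qκ ∉ ℕ. If χ₁(κ; ℓ, q) = 0 then χ₂(κ; ℓ, q) ≠ 0, where χ₁(κ; ℓ, q) = sin(2π(ℓ−q)κ)/(2π(ℓ−q)) + sin(2π(ℓ+q)κ)/(2π(ℓ+q)) − sin(2πqκ)/(πq) and χ₂(κ; ℓ, q) = sin(2π(ℓ−q)κ)/(2π(ℓ−q)) − sin(2π(ℓ+q)κ)/(2π(ℓ+q)). -/

import Mathlib

open Real Set

lemma sin_zero_to_nat (x : ℝ) (hx : 0 < x) (h : Real.sin (π * x) = 0) :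
    ∃ n : ℕ, x = n := by
  rw [Real.sin_eq_zero_iff] at h
  obtain ⟨k, hk⟩ := h
  have hπ : (0:ℝ) < π := Real.pi_pos
  have hx' : x = (k : ℝ) := by
    have := mul_left_cancel₀ (ne_of_gt hπ) (show π * (k:ℝ) = π * x by linarith [hk])
    exact this.symm
  have hk0 : 0 ≤ k := by
    by_contra hneg
    push_neg at hneg
    have : (k : ℝ) < 0 := by exact_mod_cast hneg
    linarith [hx' ▸ hx]
  exact ⟨k.toNat, by rw [hx']; exact_mod_cast (Int.toNat_of_nonneg hk0).symm⟩

lemma key_alg (L Q x c y d : ℝ) (hL : 0 < L) (hQ : 0 < Q) (hd : L - Q ≠ 0)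
    (hxc : x^2 + c^2 = 1) (hyd : y^2 + d^2 = 1)
    (k1 : (x*d - c*y)*(L+Q) = (x*d + c*y)*(L-Q))
    (k2 : (x*d - c*y)*Q = y*(L-Q)) : y = 0 ∧ x = 0 := by
  have A : Q*(x*d) = L*(c*y) := by nlinarith [k1]
  have B : y*(c-1) = 0 := by
    have h1 : y*(c-1)*(L-Q) = 0 := by nlinarith [k2, A]
    exact (mul_eq_zero.mp h1).resolve_right hd
  have hy : y = 0 := by
    by_contra hy0
    have hc : c = 1 := by
      rcases mul_eq_zero.mp B with h | h
      · exact absurd h hy0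
      · linarith [sub_eq_zero.mp h]
    have hx0 : x = 0 := by nlinarith [hxc, sq_nonneg x]
    rw [hx0, hc] at A
    have : y = 0 := by
      have : L * y = 0 := by linarith [A]
      rcases mul_eq_zero.mp this with h | h
      · exact absurd h (ne_of_gt hL)
      · exact h
    exact hy0 this
  refine ⟨hy, ?_⟩
  rw [hy] at A hyd
  have hdne : d ≠ 0 := by
    intro h; rw [h] at hyd; simp at hyd
  have hxd : x * d = 0 := by
    have : Q * (x*d) = 0 := by simpa using A
    rcases mul_eq_zero.mp this with h | h
    · exact absurd h (ne_of_gt hQ)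
    · exact h
  exact (mul_eq_zero.mp hxd).resolve_right hdne

theorem chi2_nonzero_of_chi1_zero
    (ℓ q : ℕ) (hℓ : 1 ≤ ℓ) (hq : 1 ≤ q) (hne : ℓ ≠ q)
    (κ : ℝ) (hκ : 0 < κ) (hκ' : κ < 1/2)
    (hnat : (¬ ∃ n : ℕ, 2*(ℓ:ℝ)*κ = n) ∨ (¬ ∃ n : ℕ, 2*(q:ℝ)*κ = n))
    (h₁ : Real.sin (2*π*((ℓ:ℝ)-q)*κ) / (2*π*((ℓ:ℝ)-q))
        + Real.sin (2*π*((ℓ:ℝ)+q)*κ) / (2*π*((ℓ:ℝ)+q))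
        - Real.sin (2*π*q*κ) / (π*q) = 0) :
    Real.sin (2*π*((ℓ:ℝ)-q)*κ) / (2*π*((ℓ:ℝ)-q))
      - Real.sin (2*π*((ℓ:ℝ)+q)*κ) / (2*π*((ℓ:ℝ)+q)) ≠ 0 := by
  intro h₂
  have hπ : (0:ℝ) < π := Real.pi_pos
  have hℓ0 : (0:ℝ) < (ℓ:ℝ) := by exact_mod_cast hℓ
  have hq0 : (0:ℝ) < (q:ℝ) := by exact_mod_cast hq
  have hd : (ℓ:ℝ) - q ≠ 0 := sub_ne_zero.mpr (by exact_mod_cast hne)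
  have hs : (0:ℝ) < (ℓ:ℝ) + q := by positivity
  have hab1 : 2*π*((ℓ:ℝ)-q)*κ = 2*π*(ℓ:ℝ)*κ - 2*π*(q:ℝ)*κ := by ring
  have hab2 : 2*π*((ℓ:ℝ)+q)*κ = 2*π*(ℓ:ℝ)*κ + 2*π*(q:ℝ)*κ := by ring
  have hbq : 2*π*(q:ℝ)*κ = 2*π*q*κ := by ring
  set a : ℝ := 2*π*(ℓ:ℝ)*κ with ha
  set b : ℝ := 2*π*(q:ℝ)*κ with hb
  rw [hab1, hab2] at h₁ h₂
  -- clear denominators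
  have k1 : Real.sin (a-b) * ((ℓ:ℝ)+q) = Real.sin (a+b) * ((ℓ:ℝ)-q) := by
    have h3 : Real.sin (a-b) * (2*π*((ℓ:ℝ)+q)) = Real.sin (a+b) * (2*π*((ℓ:ℝ)-q)) := by
      have hne1 : 2*π*((ℓ:ℝ)-q) ≠ 0 := by
        intro h
        rcases mul_eq_zero.mp h with h' | h'
        · nlinarith [hπ]
        · exact hd h'
      have hne2 : 2*π*((ℓ:ℝ)+q) ≠ 0 := by positivity
      have := sub_eq_zero.mp h₂
      field_simp at this
      linear_combination (2*π) * this
    have h2π : (0:ℝ) < 2*π := by linarith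
    apply mul_left_cancel₀ (ne_of_gt h2π)
    linear_combination h3
  have k2 : Real.sin (a-b) * (q:ℝ) = Real.sin b * ((ℓ:ℝ)-q) := by
    have hT : Real.sin (a-b) / (2*π*((ℓ:ℝ)-q)) = Real.sin b / (2*π*(q:ℝ)) := by
      have hπne : π ≠ 0 := ne_of_gt hπ
      have hqne : (q:ℝ) ≠ 0 := ne_of_gt hq0
      have hhalf : Real.sin b / (π*(q:ℝ)) = 2 * (Real.sin b / (2*π*(q:ℝ))) := by
        field_simp
      linarith [h₁, h₂, hhalf]
    have h3 : Real.sin (a-b) * (2*π*(q:ℝ)) = Real.sin b * (2*π*((ℓ:ℝ)-q)) := by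
      rw [div_eq_div_iff (by
        intro h
        rcases mul_eq_zero.mp h with h' | h'
        · nlinarith [hπ]
        · exact hd h') (by positivity : 2*π*(q:ℝ) ≠ 0)] at hT
      linarith [hT]
    have h2π : (0:ℝ) < 2*π := by linarith
    apply mul_left_cancel₀ (ne_of_gt h2π)
    linear_combination h3
  simp only [Real.sin_sub, Real.sin_add] at k1 k2
  obtain ⟨hsb, hsa⟩ := key_alg (ℓ:ℝ) (q:ℝ) (Real.sin a) (Real.cos a) (Real.sin b)
    (Real.cos b) hℓ0 hq0 hd (Real.sin_sq_add_cos_sq a) (Real.sin_sq_add_cos_sq b)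
    (by linear_combination k1) (by linear_combination k2)
  have hA : ∃ n : ℕ, 2*(ℓ:ℝ)*κ = n := by
    apply sin_zero_to_nat _ (by positivity)
    rw [show π * (2*(ℓ:ℝ)*κ) = a by rw [ha]; ring]
    exact hsa
  have hB : ∃ n : ℕ, 2*(q:ℝ)*κ = n := by
    apply sin_zero_to_nat _ (by positivity)
    rw [show π * (2*(q:ℝ)*κ) = b by rw [hb]; ring]
    exact hsb
  rcases hnat with h | h
  · exact h hA
  · exact h hB
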